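/- Let p > 3 be prime, ω = exp(2πi/p), a ∈ Z_p \ {0}, b, c ∈ Z_p, and let |f_{a,b,c}⟩ = p^{-1/2} Σ_k ω^{ak³+bk²+ck}|k⟩ and |ψ_B^V⟩ = p^{-1/2} Σ_k ω^{2^{-1}Bk²-Vk}|k⟩. Then for every B ∈ Z_p and V_0 ∈ Z_p, setting V_B = V_0 + (12a)^{-1}(B² - 4Bb) (arithmetic mod p), one has |⟨ψ_B^{V_B}|f_{a,b,c}⟩| = |⟨ψ_0^{V_0}|f_{a,b,c}⟩|. Consequently the multiset of transition probabilities {|⟨ψ_B^V|f_{a,b,c}⟩|² : V ∈ Z_p} is independent of the basis index B (MUB-balancedness of magic states). -/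

import Mathlib

open Complex Matrix BigOperators Finset
open scoped Kronecker

noncomputable section

/-- Additive character `a ↦ exp(2πi a/p)` on `ZMod p`. -/
def chi (p : ℕ) (a : ZMod p) : ℂ := Complex.exp (2 * Real.pi * Complex.I * (a.val : ℂ) / p)

/-- The shift operator `X : |j⟩ ↦ |j+1⟩`. -/
def Xop (p : ℕ) : Matrix (ZMod p) (ZMod p) ℂ := fun j k => if j = k + 1 then 1 else 0

/-- The clock operator `Z : |j⟩ ↦ ω^j |j⟩`. -/
def Zop (p : ℕ) : Matrix (ZMod p) (ZMod p) ℂ := Matrix.diagonal (fun j => chi p j)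

/-- Weyl-Heisenberg displacement operator `D_(x|z) = ω^{2⁻¹ x z} X^x Z^z`. -/
def Dop (p : ℕ) [NeZero p] (x z : ZMod p) : Matrix (ZMod p) (ZMod p) ℂ :=
  chi p ((2 : ZMod p)⁻¹ * x * z) • (Xop p ^ x.val * Zop p ^ z.val)

/-- The stabilizer MUB vector `|ψ_B^V⟩ = p^{-1/2} Σ_k ω^{2⁻¹ B k² - V k} |k⟩`. -/
def psi (p : ℕ) (B V : ZMod p) : ZMod p → ℂ :=
  fun k => ((Real.sqrt p : ℂ))⁻¹ * chi p ((2 : ZMod p)⁻¹ * B * k ^ 2 - V * k)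

/-- The magic state `|f_{a,b,c}⟩ = p^{-1/2} Σ_k ω^{a k³ + b k² + c k} |k⟩`. -/
def magic (p : ℕ) (a b c : ZMod p) : ZMod p → ℂ :=
  fun k => ((Real.sqrt p : ℂ))⁻¹ * chi p (a * k ^ 3 + b * k ^ 2 + c * k)

/-- Rank-one projector `|v⟩⟨v|`. -/
def proj (p : ℕ) (v : ZMod p → ℂ) : Matrix (ZMod p) (ZMod p) ℂ :=
  fun i j => v i * (starRingEnd ℂ) (v j)

/-- The single-qudit operator `S = Σ_B |ψ_B^{-B(B+2⁻¹)}⟩⟨ψ_B^{-B(B+2⁻¹)}|`. -/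
def Sop (p : ℕ) [NeZero p] : Matrix (ZMod p) (ZMod p) ℂ :=
  ∑ B : ZMod p, proj p (psi p B (-B * (B + (2 : ZMod p)⁻¹)))


lemma chi_natCast (p : ℕ) [NeZero p] (n : ℕ) :
    chi p (n : ZMod p) = Complex.exp (2 * Real.pi * Complex.I * n / p) := by
  have hp : (p : ℂ) ≠ 0 := Nat.cast_ne_zero.mpr (NeZero.ne p)
  have hdecomp : ((n % p : ℕ) : ℂ) + ((n / p : ℕ) : ℂ) * p = n := by
    exact_mod_cast congrArg (Nat.cast : ℕ → ℂ) (Nat.mod_add_div' n p)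
  have key : 2 * (Real.pi : ℂ) * Complex.I * n / p
      = 2 * Real.pi * Complex.I * ((n % p : ℕ) : ℂ) / p
        + ((n / p : ℕ) : ℤ) * (2 * Real.pi * Complex.I) := by
    have h2 : (((n / p : ℕ) : ℤ) : ℂ) = ((n / p : ℕ) : ℂ) := by push_cast; rfl
    rw [h2, ← hdecomp]
    field_simp
  unfold chi
  rw [ZMod.val_natCast, key, Complex.exp_add, Complex.exp_int_mul_two_pi_mul_I, mul_one]

lemma chi_add (p : ℕ) [NeZero p] (x y : ZMod p) : chi p (x + y) = chi p x * chi p y := by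
  have hx : x = ((x.val : ℕ) : ZMod p) := (ZMod.natCast_rightInverse x).symm
  have hy : y = ((y.val : ℕ) : ZMod p) := (ZMod.natCast_rightInverse y).symm
  have h : x + y = ((x.val + y.val : ℕ) : ZMod p) := by rw [Nat.cast_add, ← hx, ← hy]
  rw [h, chi_natCast]
  unfold chi
  rw [← Complex.exp_add]
  congr 1
  push_cast
  ring

lemma chi_zero (p : ℕ) : chi p 0 = 1 := by
  simp [chi]

lemma chi_arg (p : ℕ) (x : ZMod p) :
    chi p x = Complex.exp ((2 * Real.pi * x.val / p : ℝ) * Complex.I) := by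
  unfold chi; congr 1; push_cast; ring

lemma abs_chi (p : ℕ) (x : ZMod p) : ‖chi p x‖ = 1 := by
  rw [chi_arg, Complex.norm_exp_ofReal_mul_I]

lemma chi_ne_zero (p : ℕ) (x : ZMod p) : chi p x ≠ 0 := Complex.exp_ne_zero _

lemma conj_chi (p : ℕ) [NeZero p] (x : ZMod p) :
    (starRingEnd ℂ) (chi p x) = chi p (-x) := by
  have h1 : chi p x * chi p (-x) = 1 := by rw [← chi_add]; simp [chi_zero]
  have h2 : chi p x * (starRingEnd ℂ) (chi p x) = 1 := by
    rw [Complex.mul_conj, Complex.normSq_eq_norm_sq, abs_chi]; norm_num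
  exact mul_left_cancel₀ (chi_ne_zero p x) (h2.trans h1.symm)

lemma twelve_ne_zero (p : ℕ) [Fact p.Prime] (hp3 : 3 < p) : (12 : ZMod p) ≠ 0 := by
  have hp : p.Prime := Fact.out
  have : ((12 : ℕ) : ZMod p) = (12 : ZMod p) := by norm_cast
  rw [← this, Ne, ZMod.natCast_eq_zero_iff]
  intro h
  have hle := Nat.le_of_dvd (by norm_num) h
  interval_cases p <;> revert h hp <;> decide

lemma key (p : ℕ) [Fact p.Prime] (hp3 : 3 < p) (a b c : ZMod p) (ha : a ≠ 0) (B V₀ : ZMod p) :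
    ∃ C : ZMod p,
      (∑ k : ZMod p, (starRingEnd ℂ)
          (psi p B (V₀ + (12 * a)⁻¹ * (B ^ 2 - 4 * B * b)) k) * magic p a b c k)
        = chi p C * ∑ k : ZMod p, (starRingEnd ℂ) (psi p 0 V₀ k) * magic p a b c k := by
  haveI : NeZero p := ⟨(Fact.out : p.Prime).ne_zero⟩
  set u := (12 * a)⁻¹ with hu_def
  have h12a : (12 : ZMod p) * a ≠ 0 := mul_ne_zero (twelve_ne_zero p hp3) ha
  have hu : 12 * a * u = 1 := mul_inv_cancel₀ h12a
  have h2 : (2 : ZMod p)⁻¹ = 6 * a * u := inv_eq_of_mul_eq_one_right (by linear_combination hu)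
  set V : ZMod p := V₀ + u * (B ^ 2 - 4 * B * b) with hV
  have term_eq : ∀ (Bv Vv k : ZMod p),
      (starRingEnd ℂ) (psi p Bv Vv k) * magic p a b c k
        = ((Real.sqrt p : ℂ))⁻¹ * ((Real.sqrt p : ℂ))⁻¹ *
            chi p (a * k ^ 3 + b * k ^ 2 + c * k - ((2 : ZMod p)⁻¹ * Bv * k ^ 2 - Vv * k)) := by
    intro Bv Vv k
    unfold psi magic
    rw [_root_.map_mul, map_inv₀, Complex.conj_ofReal, conj_chi, mul_mul_mul_comm, ← chi_add]
    exact congrArg (fun z => (Real.sqrt p : ℂ)⁻¹ * (Real.sqrt p : ℂ)⁻¹ * z)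
      (congrArg (chi p) (by ring))
  refine ⟨a * (2*u*B) ^ 3 + (b - 6*a*u*B) * (2*u*B) ^ 2 + (c + V) * (2*u*B), ?_⟩
  simp only [term_eq]
  rw [← Finset.mul_sum, ← Finset.mul_sum, mul_left_comm]
  congr 1
  rw [Finset.mul_sum]
  have reindex : ∑ k : ZMod p,
        chi p (a * (k + 2*u*B) ^ 3 + b * (k + 2*u*B) ^ 2 + c * (k + 2*u*B)
          - ((2 : ZMod p)⁻¹ * B * (k + 2*u*B) ^ 2 - V * (k + 2*u*B)))
      = ∑ k : ZMod p,
        chi p (a * k ^ 3 + b * k ^ 2 + c * k - ((2 : ZMod p)⁻¹ * B * k ^ 2 - V * k)) :=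
    Fintype.sum_equiv (Equiv.addRight (2*u*B)) _ _ (fun k => rfl)
  rw [← reindex]
  refine Finset.sum_congr rfl fun k _ => ?_
  rw [← chi_add]
  congr 1
  rw [h2, hV]
  linear_combination (-(u * B ^ 2 * k)) * hu


theorem stmt5 (p : ℕ) [Fact p.Prime] (hp3 : 3 < p) (a b c : ZMod p) (ha : a ≠ 0) :
    (∀ B V₀ : ZMod p,
      ‖∑ k : ZMod p,
          (starRingEnd ℂ) (psi p B (V₀ + (12 * a)⁻¹ * (B ^ 2 - 4 * B * b)) k) * magic p a b c k‖
        = ‖∑ k : ZMod p, (starRingEnd ℂ) (psi p 0 V₀ k) * magic p a b c k‖) ∧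
    (∀ B : ZMod p,
      Multiset.map
          (fun V : ZMod p =>
            ‖∑ k : ZMod p, (starRingEnd ℂ) (psi p B V k) * magic p a b c k‖ ^ 2)
          Finset.univ.val
        = Multiset.map
            (fun V : ZMod p =>
              ‖∑ k : ZMod p, (starRingEnd ℂ) (psi p 0 V k) * magic p a b c k‖ ^ 2)
            Finset.univ.val) := by
  have h1 : ∀ B V₀ : ZMod p,
      ‖∑ k : ZMod p,
          (starRingEnd ℂ) (psi p B (V₀ + (12 * a)⁻¹ * (B ^ 2 - 4 * B * b)) k) * magic p a b c k‖
        = ‖∑ k : ZMod p, (starRingEnd ℂ) (psi p 0 V₀ k) * magic p a b c k‖ := by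
    intro B V₀
    obtain ⟨C, hC⟩ := key p hp3 a b c ha B V₀
    rw [hC, norm_mul, abs_chi, one_mul]
  refine ⟨h1, fun B => ?_⟩
  have he : Finset.univ.map (Equiv.addRight ((12 * a)⁻¹ * (B ^ 2 - 4 * B * b))).toEmbedding
      = Finset.univ := Finset.map_univ_equiv _
  have hm : Multiset.map (⇑(Equiv.addRight ((12 * a)⁻¹ * (B ^ 2 - 4 * B * b))).toEmbedding)
      Finset.univ.val = Finset.univ.val := by
    rw [← Finset.map_val, he]
  conv_lhs => rw [← hm]
  rw [Multiset.map_map]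
  refine Multiset.map_congr rfl fun V _ => ?_
  simp only [Function.comp, Equiv.coe_toEmbedding, Equiv.coe_addRight]
  rw [h1 B V]
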